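/- Let A be the real 2×2 matrix A = (1/81)·[[−83, 28], [−12, −75]]. Then det A = 1, trace A = −158/81, (trace A)² < 4 so that A has no real eigenvalue, and there exists a symmetric positive definite 2×2 matrix Q with Aᵀ Q A = Q (hence every orbit of the linear map V ↦ A·V lies on an ellipse). -/

import Mathlib

open Matrix

/-- The matrix `A = (1/81)·[[-83, 28], [-12, -75]]` (the linear part of the first return
map of the billiard beam `(abcd)^∞` in the regular tetrahedron) has determinant `1`,
trace `-158/81` with `(tr A)² < 4`, hence no real eigenvalue, and preserves a positive
definite symmetric quadratic form `Q` (so every orbit of `V ↦ A · V` lies on an ellipse). -/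
theorem return_map_matrix_elliptic :
    let A : Matrix (Fin 2) (Fin 2) ℝ := (1 / 81 : ℝ) • !![-83, 28; -12, -75]
    A.det = 1 ∧
    A.trace = -158 / 81 ∧
    A.trace ^ 2 < 4 ∧
    (¬∃ (μ : ℝ) (v : Fin 2 → ℝ), v ≠ 0 ∧ A.mulVec v = μ • v) ∧
    ∃ Q : Matrix (Fin 2) (Fin 2) ℝ, Q.IsSymm ∧ Q.PosDef ∧ Aᵀ * Q * A = Q := by
  intro A
  refine ⟨?_, ?_, ?_, ?_, ?_⟩
  · simp [A, Matrix.det_fin_two, Matrix.smul_apply]; norm_num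
  · simp [A, Matrix.trace_fin_two, Matrix.smul_apply]; norm_num
  · simp [A, Matrix.trace_fin_two, Matrix.smul_apply]; norm_num
  · rintro ⟨μ, v, hv, hAv⟩
    have h0 : (A - μ • 1).mulVec v = 0 := by
      rw [Matrix.sub_mulVec, hAv]
      simp [Matrix.smul_mulVec, Matrix.one_mulVec]
    have hdet : (A - μ • 1).det = 0 := by
      rw [← Matrix.exists_mulVec_eq_zero_iff]
      exact ⟨v, hv, h0⟩
    have : μ ^ 2 + (158 / 81) * μ + 1 = 0 := by
      have : (A - μ • 1).det = μ ^ 2 + (158 / 81) * μ + 1 := by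
        simp [A, Matrix.det_fin_two, Matrix.smul_apply, Matrix.one_apply]
        ring
      linarith [this ▸ hdet]
    nlinarith [sq_nonneg (μ + 79 / 81)]
  · refine ⟨!![3, -1; -1, 7], ?_, ?_, ?_⟩
    · rw [Matrix.IsSymm]
      ext i j
      fin_cases i <;> fin_cases j <;> simp
    · rw [Matrix.posDef_iff_dotProduct_mulVec]
      constructor
      · rw [Matrix.IsHermitian]
        ext i j
        fin_cases i <;> fin_cases j <;> simp
      · intro x hx
        have h : x 0 ≠ 0 ∨ x 1 ≠ 0 := by
          by_contra h
          push_neg at h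
          exact hx (funext fun i => by fin_cases i <;> simp [h.1, h.2])
        simp [Matrix.mulVec, dotProduct, Fin.sum_univ_two]
        rcases h with h | h
        · have hp : 0 < x 0 ^ 2 := by positivity
          nlinarith [sq_nonneg (x 0 - x 1), sq_nonneg (x 1)]
        · have hp : 0 < x 1 ^ 2 := by positivity
          nlinarith [sq_nonneg (x 0 - x 1), sq_nonneg (x 0)]
    · show ((1 / 81 : ℝ) • !![-83, 28; -12, -75])ᵀ * _ * _ = _
      rw [Matrix.transpose_smul, Matrix.smul_mul, Matrix.smul_mul, Matrix.mul_smul]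
      norm_num [Matrix.transpose]
      ext i j
      fin_cases i <;> fin_cases j <;>
        simp [Matrix.mul_apply, Fin.sum_univ_two, Matrix.smul_apply] <;> norm_num
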